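/- In the Leibniz algebra L(γ) with γᵢ = -1 for all i (products [fᵢ,xᵢ] = fᵢ, [xᵢ,fᵢ] = -fᵢ), every derivation is inner, i.e., equal to a right multiplication operator R_a for some a ∈ L(γ). -/
import Mathlib


noncomputable section

open Finset

/-- Underlying space of `L(γ)` with `γᵢ = -1`, basis `f₁,…,f_k, x₁,…,x_k`. -/
abbrev Lneg (k : ℕ) := (Fin k ⊕ Fin k) → ℂ

/-- basis vector `fᵢ` -/
def Fb (k : ℕ) (i : Fin k) : Lneg k := fun s =>
  match s with
  | .inl a => if a = i then 1 else 0
  | .inr _ => 0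

/-- Structure constants: `[fᵢ,xᵢ] = fᵢ`, `[xᵢ,fᵢ] = -fᵢ`. -/
def cneg (k : ℕ) : (Fin k ⊕ Fin k) → (Fin k ⊕ Fin k) → Lneg k
  | .inl a, .inr b => if a = b then Fb k a else 0
  | .inr a, .inl b => if a = b then -Fb k b else 0
  | _, _ => 0

/-- Bracket of `L(γ)` with `γᵢ = -1`. -/
def brkneg (k : ℕ) (x y : Lneg k) : Lneg k :=
  ∑ i : Fin k ⊕ Fin k, ∑ j : Fin k ⊕ Fin k, (x i * y j) • cneg k i j

/-- basis vector `xᵢ` -/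
def Xb (k : ℕ) (i : Fin k) : Lneg k := fun s =>
  match s with
  | .inl _ => 0
  | .inr a => if a = i then 1 else 0

lemma brk_inl (k : ℕ) (u v : Lneg k) (m : Fin k) :
    brkneg k u v (.inl m) = u (.inl m) * v (.inr m) - u (.inr m) * v (.inl m) := by
  unfold brkneg
  simp [Finset.sum_apply, Fintype.sum_sum_type, cneg, Fb, apply_ite (fun f : Lneg k => f (Sum.inl m))]
  ring

lemma brk_inr (k : ℕ) (u v : Lneg k) (m : Fin k) :
    brkneg k u v (.inr m) = 0 := by
  unfold brkneg
  simp [Finset.sum_apply, Fintype.sum_sum_type, cneg, Fb, apply_ite (fun f : Lneg k => f (Sum.inr m))]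

/-- In `L(γ)` with all `γᵢ = -1`, every derivation is inner: it equals the
right multiplication operator `R_a : y ↦ [y,a]` for some `a`. -/
theorem derivations_of_Lgamma_neg_are_inner (k : ℕ)
    (d : Lneg k →ₗ[ℂ] Lneg k)
    (hd : ∀ u v : Lneg k, d (brkneg k u v) = brkneg k (d u) v + brkneg k u (d v)) :
    ∃ a : Lneg k, ∀ y : Lneg k, d y = brkneg k y a := by
  -- bracket of basis vectors
  have hbFX : ∀ i j : Fin k, brkneg k (Fb k i) (Xb k j) =
      if i = j then Fb k i else 0 := by
    intro i j
    funext t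
    cases t with
    | inl m =>
      simp only [brk_inl, Fb, Xb, Pi.zero_apply]
      by_cases h1 : m = i <;> by_cases h2 : m = j <;> by_cases h3 : i = j <;>
        simp_all [Fb]
    | inr m =>
      simp only [brk_inr, Fb, Xb]
      by_cases h3 : i = j <;> simp [h3, Fb]
  have hbXX : ∀ i j : Fin k, brkneg k (Xb k i) (Xb k j) = 0 := by
    intro i j; funext t
    cases t with
    | inl m => simp [brk_inl, Xb]
    | inr m => simp [brk_inr]
  -- derivation facts
  have hFX : ∀ i j t, (if i = j then d (Fb k i) t else 0)
      = brkneg k (d (Fb k i)) (Xb k j) t + brkneg k (Fb k i) (d (Xb k j)) t := by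
    intro i j t
    have h := congrFun (hd (Fb k i) (Xb k j)) t
    rw [hbFX] at h
    by_cases h3 : i = j
    · simpa [h3] using h
    · simpa [h3] using h
  have hdF_inr : ∀ i m, d (Fb k i) (.inr m) = 0 := by
    intro i m
    have h := hFX i i (.inr m)
    simpa [brk_inr] using h
  have hdX_inr : ∀ i m, d (Xb k i) (.inr m) = 0 := by
    intro i m
    have h := hFX m i (.inl m)
    simp only [brk_inl, Fb, Xb, if_pos rfl, hdF_inr, mul_zero, zero_mul, mul_one, one_mul,
      sub_zero, zero_sub] at h
    by_cases hmi : m = i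
    · subst hmi
      -- h : d (Fb k m) (inl m) = d (Fb k m) (inl m) * 1 + d (Xb k m) (inr m)
      simp only [if_true, mul_one, one_mul] at h
      linear_combination -h
    · simp only [hmi, if_false, mul_zero, zero_add] at h
      simpa using h.symm
  have hdF_offdiag : ∀ i m : Fin k, m ≠ i → d (Fb k i) (.inl m) = 0 := by
    intro i m hmi
    have h := hFX i i (.inl m)
    simp only [if_pos rfl, brk_inl, Fb, Xb, hdF_inr, hdX_inr, hmi, if_false,
      mul_zero, zero_mul, mul_one, one_mul, sub_zero, zero_sub, add_zero, zero_add] at h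
    simpa [hmi] using h
  have hdX_offdiag : ∀ i j : Fin k, j ≠ i → d (Xb k i) (.inl j) = 0 := by
    intro i j hji
    have h := congrFun (hd (Xb k i) (Xb k j)) (.inl j)
    rw [hbXX i j] at h
    simp only [map_zero, Pi.zero_apply, brk_inl, Xb, hdX_inr, Pi.add_apply,
      mul_zero, zero_mul, sub_zero, zero_sub, add_zero, zero_add, hji, if_false] at h
    simpa [hji] using h.symm
  -- the inner element
  refine ⟨fun s => match s with
    | .inl i => -(d (Xb k i) (.inl i))
    | .inr i => d (Fb k i) (.inl i), ?_⟩
  intro y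
  have hps1 : ∀ i : Fin k, (Pi.single (Sum.inl i) (1:ℂ) : Lneg k) = Fb k i := by
    intro i; funext t
    cases t <;> simp [Fb, Pi.single_apply, Sum.inl.injEq]
  have hps2 : ∀ i : Fin k, (Pi.single (Sum.inr i) (1:ℂ) : Lneg k) = Xb k i := by
    intro i; funext t
    cases t <;> simp [Xb, Pi.single_apply, Sum.inr.injEq]
  have hy : y = ∑ s : Fin k ⊕ Fin k, y s • (Pi.single s 1 : Lneg k) := by
    funext t
    simp [Finset.sum_apply, Pi.single_apply]
  have hdy : d y = ∑ s : Fin k ⊕ Fin k, y s • d (Pi.single s 1 : Lneg k) := by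
    conv_lhs => rw [hy]
    rw [map_sum]
    simp only [map_smul]
  rw [hdy]
  funext t
  cases t with
  | inl m =>
    simp only [Finset.sum_apply, Pi.smul_apply, smul_eq_mul, Fintype.sum_sum_type,
      hps1, hps2, brk_inl]
    rw [Finset.sum_eq_single m (by intro b _ hbm; simp [hdF_offdiag b m (Ne.symm hbm)])
      (by simp),
      Finset.sum_eq_single m (by intro b _ hbm; simp [hdX_offdiag b m (Ne.symm hbm)])
      (by simp)]
    ring
  | inr m =>
    simp only [Finset.sum_apply, Pi.smul_apply, smul_eq_mul, Fintype.sum_sum_type,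
      hps1, hps2, brk_inr, hdF_inr, hdX_inr, mul_zero]
    simp

end
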